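/- Let G = (V,E) be a finite simple undirected connected graph with ν̄_G ≥ 0. Then ν̄_G = |V| - ν₂(G) = |V| - τ₂(G), where ν₂(G) is the maximum size of a 2-matching of G and τ₂(G) is the minimum size of a 2-vertex cover of G. -/
import Mathlib


open Finset

variable {V : Type*}

/-- `N(T)`: the set of vertices adjacent to at least one vertex of `T`. -/
def nbhd [Fintype V] [DecidableEq V] (G : SimpleGraph V) [DecidableRel G.Adj]
    (T : Finset V) : Finset V :=
  Finset.univ.filter fun j => ∃ i ∈ T, G.Adj i j

/-- The vulnerability function `v_G(T) = |T| - |N(T)|`. -/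
def vuln [Fintype V] [DecidableEq V] (G : SimpleGraph V) [DecidableRel G.Adj]
    (T : Finset V) : ℤ :=
  (T.card : ℤ) - ((nbhd G T).card : ℤ)

/-- `S` is an independent set of `G`. -/
def IsIndepF (G : SimpleGraph V) (S : Finset V) : Prop :=
  ∀ i ∈ S, ∀ j ∈ S, ¬ G.Adj i j

/-- `w` is a 2-matching of `H`: weights `0`, `1` or `2` on the edges such that for every vertex
the sum of the weights of the incident edges is at most 2. -/
def IsTwoMatching {W : Type*} (H : SimpleGraph W) (w : Sym2 W → ℕ) : Prop :=
  (∀ e ∈ H.edgeSet, w e ≤ 2) ∧ ∀ v : W, ∑ᶠ e ∈ H.incidenceSet v, w e ≤ 2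

/-- `u` is a 2-vertex cover of `H`: weights `0`, `1` or `2` on the vertices such that for every
edge the sum of the weights of its endpoints is at least 2. -/
def IsTwoVertexCover {W : Type*} (H : SimpleGraph W) (u : W → ℕ) : Prop :=
  (∀ i, u i ≤ 2) ∧ ∀ i j, H.Adj i j → 2 ≤ u i + u j


set_option linter.unusedSectionVars false

section VulnAux
variable [Fintype V] [DecidableEq V] (G : SimpleGraph V) [DecidableRel G.Adj]

lemma mem_nbhd {T : Finset V} {j : V} : j ∈ nbhd G T ↔ ∃ i ∈ T, G.Adj i j := by
  simp [nbhd]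

lemma indep_disjoint_nbhd {S : Finset V} (hS : IsIndepF G S) :
    Disjoint S (nbhd G S) := by
  rw [Finset.disjoint_left]
  intro v hvS hvN
  obtain ⟨i, hiS, hadj⟩ := (mem_nbhd G).1 hvN
  exact hS i hiS v hvS hadj

/-- General deficiency bound: every set (not just independent) has deficiency at most `nuBar`. -/
lemma deficiency_le (nuBar : ℤ) (hnonneg : 0 ≤ nuBar)
    (hub : ∀ S : Finset V, S.Nonempty → IsIndepF G S → vuln G S ≤ nuBar)
    (A : Finset V) : (A.card : ℤ) - ((nbhd G A).card : ℤ) ≤ nuBar := by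
  classical
  set I : Finset V := A.filter (fun v => ∀ u ∈ A, ¬ G.Adj u v) with hI
  set K : Finset V := A \ I with hK
  have hIA : I ⊆ A := Finset.filter_subset _ _
  have hcardA : A.card = I.card + K.card := by
    have := Finset.card_le_card hIA
    rw [hK, Finset.card_sdiff_of_subset hIA]; omega
  have hKN : K ⊆ nbhd G A := by
    intro v hv
    rw [hK, Finset.mem_sdiff, hI, Finset.mem_filter] at hv
    obtain ⟨hvA, hv2⟩ := hv
    rw [mem_nbhd]
    push_neg at hv2
    obtain ⟨u, huA, hadj⟩ := hv2 hvA
    exact ⟨u, huA, hadj⟩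
  have hNIN : nbhd G I ⊆ nbhd G A := by
    intro v hv
    rw [mem_nbhd] at hv ⊢
    obtain ⟨i, hi, h⟩ := hv
    exact ⟨i, hIA hi, h⟩
  have hdisj : Disjoint (nbhd G I) K := by
    rw [Finset.disjoint_left]
    intro v hvN hvK
    obtain ⟨i, hiI, hadj⟩ := (mem_nbhd G).1 hvN
    have hvA : v ∈ A := (Finset.sdiff_subset) hvK
    rw [hI, Finset.mem_filter] at hiI
    exact hiI.2 v hvA hadj.symm
  have hcard : (nbhd G I).card + K.card ≤ (nbhd G A).card := by
    have := Finset.card_le_card (Finset.union_subset hNIN hKN)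
    rwa [Finset.card_union_of_disjoint hdisj] at this
  have hIbound : (I.card : ℤ) - ((nbhd G I).card : ℤ) ≤ nuBar := by
    rcases I.eq_empty_or_nonempty with h | h
    · have hne : nbhd G I = ∅ := by
        rw [h]; ext v; simp [mem_nbhd]
      rw [hne, h]; simpa using hnonneg
    · have hind : IsIndepF G I := by
        intro i hi j hj hadj
        rw [hI, Finset.mem_filter] at hi hj
        exact hj.2 i (hIA (by rw [hI, Finset.mem_filter]; exact hi)) hadj
      simpa [vuln] using hub I h hind
  omega

lemma filter_mem_sym2_card (X : Finset V) {a b : V} (hab : a ≠ b) :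
    (X.filter (fun v => v ∈ s(a,b))).card
      = (if a ∈ X then 1 else 0) + (if b ∈ X then 1 else 0) := by
  rw [Finset.card_filter]
  have h : ∀ v ∈ X, (if v ∈ s(a,b) then 1 else 0)
      = ((if v = a then 1 else 0) + (if v = b then 1 else 0)) := by
    intro v _
    by_cases ha : v = a <;> by_cases hb : v = b <;>
      simp_all [Sym2.mem_iff]
  rw [Finset.sum_congr rfl h, Finset.sum_add_distrib,
    Finset.sum_ite_eq' X a (fun _ => 1), Finset.sum_ite_eq' X b (fun _ => 1)]

lemma finsum_incidence (w : Sym2 V → ℕ) (v : V) :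
    ∑ᶠ e ∈ G.incidenceSet v, w e = ∑ e ∈ G.incidenceFinset v, w e := by
  have h : (↑(G.incidenceFinset v) : Set (Sym2 V)) = G.incidenceSet v := by
    ext e; simp [SimpleGraph.mem_incidenceFinset]
  rw [← h, finsum_mem_coe_finset]

lemma finsum_edge (w : Sym2 V → ℕ) :
    ∑ᶠ e ∈ G.edgeSet, w e = ∑ e ∈ G.edgeFinset, w e := by
  rw [← G.coe_edgeFinset, finsum_mem_coe_finset]

lemma sum_incidence_eq (w : Sym2 V → ℕ) :
    ∑ v : V, ∑ e ∈ G.incidenceFinset v, w e = 2 * ∑ e ∈ G.edgeFinset, w e := by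
  have h1 : ∀ v : V, ∑ e ∈ G.incidenceFinset v, w e
      = ∑ e ∈ G.edgeFinset, if v ∈ e then w e else 0 := by
    intro v
    rw [G.incidenceFinset_eq_filter v, Finset.sum_filter]
  simp_rw [h1]
  rw [Finset.sum_comm, Finset.mul_sum]
  refine Finset.sum_congr rfl ?_
  intro e he
  rw [SimpleGraph.mem_edgeFinset] at he
  induction e with
  | h a b =>
    have hab : a ≠ b := ((SimpleGraph.mem_edgeSet G).1 he).ne
    rw [← Finset.sum_filter, Finset.sum_const, filter_mem_sym2_card _ hab]
    simp [two_mul]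

lemma sum_over_set_eq (w : Sym2 V → ℕ) (X : Finset V) :
    ∑ v ∈ X, ∑ e ∈ G.incidenceFinset v, w e
      = ∑ e ∈ G.edgeFinset, ((X.filter (fun v => v ∈ e)).card) * w e := by
  have h1 : ∀ v : V, ∑ e ∈ G.incidenceFinset v, w e
      = ∑ e ∈ G.edgeFinset, if v ∈ e then w e else 0 := by
    intro v
    rw [G.incidenceFinset_eq_filter v, Finset.sum_filter]
  simp_rw [h1]
  rw [Finset.sum_comm]
  refine Finset.sum_congr rfl ?_
  intro e _
  rw [← Finset.sum_filter, Finset.sum_const, smul_eq_mul]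

/-- Any 2-matching has size at most `n - (|S| - |N(S)|)` for an independent set `S`. -/
lemma matching_size_le (S : Finset V) (hSind : IsIndepF G S)
    (w : Sym2 V → ℕ) (hw : IsTwoMatching G w) :
    (∑ e ∈ G.edgeFinset, w e) + S.card ≤ Fintype.card V + (nbhd G S).card := by
  classical
  set N := nbhd G S with hN
  have hdisj : Disjoint S N := by
    rw [Finset.disjoint_left]
    intro v hvS hvN
    obtain ⟨i, hiS, hadj⟩ := (mem_nbhd G).1 hvN
    exact hSind i hiS v hvS hadj
  set d : V → ℕ := fun v => ∑ e ∈ G.incidenceFinset v, w e with hd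
  have hdeg : ∀ v, d v ≤ 2 := by
    intro v
    have := hw.2 v
    rwa [finsum_incidence] at this
  have hdouble : ∑ v : V, d v = 2 * ∑ e ∈ G.edgeFinset, w e := sum_incidence_eq G w
  have hSN : ∑ v ∈ S, d v ≤ ∑ v ∈ N, d v := by
    rw [hd, sum_over_set_eq, sum_over_set_eq]
    refine Finset.sum_le_sum ?_
    intro e he
    rw [SimpleGraph.mem_edgeFinset] at he
    induction e with
    | h a b =>
      have hadj : G.Adj a b := (SimpleGraph.mem_edgeSet G).1 he
      refine Nat.mul_le_mul_right _ ?_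
      rw [filter_mem_sym2_card S hadj.ne, filter_mem_sym2_card N hadj.ne]
      have h1 : a ∈ S → b ∈ N := fun h => (mem_nbhd G).2 ⟨a, h, hadj⟩
      have h2 : b ∈ S → a ∈ N := fun h => (mem_nbhd G).2 ⟨b, h, hadj.symm⟩
      have h3 : ¬(a ∈ S ∧ b ∈ S) := fun h => hSind a h.1 b h.2 hadj
      split_ifs <;> simp_all
  -- partition univ into S, N, R
  set R := (Finset.univ \ S) \ N with hR
  have hNsub : N ⊆ Finset.univ \ S := by
    intro v hv
    simp only [Finset.mem_sdiff, Finset.mem_univ, true_and]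
    exact fun hvS => (Finset.disjoint_left.1 hdisj) hvS hv
  have hcardR : R.card + S.card + N.card = Fintype.card V := by
    rw [hR, Finset.card_sdiff_of_subset hNsub, Finset.card_sdiff_of_subset (Finset.subset_univ S)]
    have h1 : S.card ≤ Fintype.card V := by
      simpa using Finset.card_le_card (Finset.subset_univ S)
    have h2 : N.card ≤ Fintype.card V - S.card := by
      have := Finset.card_le_card hNsub
      rwa [Finset.card_sdiff_of_subset (Finset.subset_univ S), Finset.card_univ] at this
    simp only [Finset.card_univ] at *
    omega
  have hsplit : ∑ v : V, d v = ∑ v ∈ S, d v + ∑ v ∈ N, d v + ∑ v ∈ R, d v := by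
    rw [← Finset.sum_sdiff (Finset.subset_univ S), ← Finset.sum_sdiff hNsub]
    ring
  have hNbound : ∑ v ∈ N, d v ≤ 2 * N.card := by
    calc ∑ v ∈ N, d v ≤ ∑ _v ∈ N, 2 := Finset.sum_le_sum (fun v _ => hdeg v)
    _ = 2 * N.card := by rw [Finset.sum_const, smul_eq_mul, mul_comm]
  have hRbound : ∑ v ∈ R, d v ≤ 2 * R.card := by
    calc ∑ v ∈ R, d v ≤ ∑ _v ∈ R, 2 := Finset.sum_le_sum (fun v _ => hdeg v)
    _ = 2 * R.card := by rw [Finset.sum_const, smul_eq_mul, mul_comm]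
  omega

/-- Explicit 2-vertex cover of size `n - |S| + |N(S)|`. -/
lemma cover_exists (S : Finset V) (hSind : IsIndepF G S) :
    ∃ u : V → ℕ, IsTwoVertexCover G u ∧
      (∑ i, u i) + S.card = Fintype.card V + (nbhd G S).card := by
  classical
  set N := nbhd G S with hN
  have hdisj : Disjoint S N := by
    rw [Finset.disjoint_left]
    intro v hvS hvN
    obtain ⟨i, hiS, hadj⟩ := (mem_nbhd G).1 hvN
    exact hSind i hiS v hvS hadj
  refine ⟨fun i => if i ∈ S then 0 else if i ∈ N then 2 else 1, ⟨?_, ?_⟩, ?_⟩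
  · intro i; simp only []; split_ifs <;> omega
  · intro i j hadj
    have h1 : i ∈ S → j ∈ N := fun h => (mem_nbhd G).2 ⟨i, h, hadj⟩
    have h2 : j ∈ S → i ∈ N := fun h => (mem_nbhd G).2 ⟨j, h, hadj.symm⟩
    have h3 : ¬(i ∈ S ∧ j ∈ S) := fun h => hSind i h.1 j h.2 hadj
    have h4 := Finset.disjoint_left.1 hdisj
    simp only []
    split_ifs <;> simp_all
  · set R := (Finset.univ \ S) \ N with hR
    have hNsub : N ⊆ Finset.univ \ S := by
      intro v hv
      simp only [Finset.mem_sdiff, Finset.mem_univ, true_and]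
      exact fun hvS => (Finset.disjoint_left.1 hdisj) hvS hv
    have hcardR : R.card + S.card + N.card = Fintype.card V := by
      rw [hR, Finset.card_sdiff_of_subset hNsub, Finset.card_sdiff_of_subset (Finset.subset_univ S)]
      have h1 : S.card ≤ Fintype.card V := by
        simpa using Finset.card_le_card (Finset.subset_univ S)
      have h2 : N.card ≤ Fintype.card V - S.card := by
        have := Finset.card_le_card hNsub
        rwa [Finset.card_sdiff_of_subset (Finset.subset_univ S), Finset.card_univ] at this
      simp only [Finset.card_univ] at *
      omega
    have hsplit : ∀ u : V → ℕ, ∑ i : V, u i = ∑ i ∈ S, u i + ∑ i ∈ N, u i + ∑ i ∈ R, u i := by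
      intro u
      rw [← Finset.sum_sdiff (Finset.subset_univ S), ← Finset.sum_sdiff hNsub]
      ring
    rw [hsplit]
    have e1 : ∑ i ∈ S, (if i ∈ S then 0 else if i ∈ N then 2 else 1) = 0 := by
      apply Finset.sum_eq_zero; intro i hi; simp [hi]
    have e2 : ∑ i ∈ N, (if i ∈ S then 0 else if i ∈ N then 2 else 1) = 2 * N.card := by
      rw [Finset.sum_congr rfl (fun i hi => ?_), Finset.sum_const, smul_eq_mul, mul_comm]
      have : i ∉ S := fun h => (Finset.disjoint_left.1 hdisj) h hi
      simp [this, hi]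
    have e3 : ∑ i ∈ R, (if i ∈ S then 0 else if i ∈ N then 2 else 1) = R.card := by
      rw [Finset.sum_congr rfl (fun i hi => ?_), Finset.sum_const, smul_eq_mul, mul_one]
      rw [hR] at hi
      simp only [Finset.mem_sdiff, Finset.mem_univ, true_and] at hi
      simp [hi.1, hi.2]
    rw [e1, e2, e3]
    omega

/-- The hard direction: there is a 2-matching of size at least `n - nuBar`. -/
lemma big_matching_exists (nuBar : ℤ) (hnonneg : 0 ≤ nuBar)
    (hdef : ∀ A : Finset V, (A.card : ℤ) - ((nbhd G A).card : ℤ) ≤ nuBar) :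
    ∃ w : Sym2 V → ℕ, IsTwoMatching G w ∧
      (Fintype.card V : ℤ) - nuBar ≤ (∑ e ∈ G.edgeFinset, w e : ℤ) := by
  classical
  set D : ℕ := nuBar.toNat with hD
  have hDcast : (D : ℤ) = nuBar := Int.toNat_of_nonneg hnonneg
  set inlEmb : V ↪ V ⊕ Fin D := ⟨Sum.inl, Sum.inl_injective⟩ with hinlEmb
  set inrEmb : Fin D ↪ V ⊕ Fin D := ⟨Sum.inr, Sum.inr_injective⟩ with hinrEmb
  set t : V → Finset (V ⊕ Fin D) :=
    fun i => ((G.neighborFinset i).map inlEmb) ∪ ((Finset.univ : Finset (Fin D)).map inrEmb)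
    with ht
  have hall : ∀ A : Finset V, A.card ≤ (A.biUnion t).card := by
    intro A
    rcases A.eq_empty_or_nonempty with h | h
    · simp [h]
    · have hsub : ((nbhd G A).map inlEmb) ∪ ((Finset.univ : Finset (Fin D)).map inrEmb)
          ⊆ A.biUnion t := by
        intro x hx
        rw [Finset.mem_union] at hx
        rcases hx with hx | hx
        · rw [Finset.mem_map] at hx
          obtain ⟨j, hj, rfl⟩ := hx
          obtain ⟨i, hiA, hadj⟩ := (mem_nbhd G).1 hj
          rw [Finset.mem_biUnion]
          refine ⟨i, hiA, ?_⟩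
          rw [ht]
          apply Finset.mem_union_left
          rw [Finset.mem_map]
          exact ⟨j, (G.mem_neighborFinset i j).2 hadj, rfl⟩
        · obtain ⟨i, hiA⟩ := h
          rw [Finset.mem_biUnion]
          refine ⟨i, hiA, ?_⟩
          rw [ht]
          exact Finset.mem_union_right _ hx
      have hdisjlr : Disjoint ((nbhd G A).map inlEmb)
          ((Finset.univ : Finset (Fin D)).map inrEmb) := by
        rw [Finset.disjoint_left]
        intro x hx1 hx2
        rw [Finset.mem_map] at hx1 hx2
        obtain ⟨j, _, rfl⟩ := hx1
        obtain ⟨k, _, hk⟩ := hx2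
        exact Sum.inr_ne_inl hk
      have hcard := Finset.card_le_card hsub
      rw [Finset.card_union_of_disjoint hdisjlr, Finset.card_map, Finset.card_map,
        Finset.card_univ, Fintype.card_fin] at hcard
      have h1 := hdef A
      omega
  obtain ⟨f, hfinj, hft⟩ := (Finset.all_card_le_biUnion_card_iff_exists_injective t).1 hall
  -- if f i = inl j, then i and j are adjacent
  have hadj_of : ∀ i j : V, f i = Sum.inl j → G.Adj i j := by
    intro i j hij
    have := hft i
    rw [ht, hij, Finset.mem_union] at this
    rcases this with h | h
    · rw [Finset.mem_map] at h
      obtain ⟨x, hx, hx2⟩ := h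
      rw [hinlEmb] at hx2
      simp only [Function.Embedding.coeFn_mk, Sum.inl.injEq] at hx2
      subst hx2
      exact (G.mem_neighborFinset i x).1 hx
    · rw [Finset.mem_map] at h
      obtain ⟨k, _, hk⟩ := h
      rw [hinrEmb] at hk
      exact absurd hk (by simp)
  set P : V → Sym2 V → Prop := fun i e => ∃ j, f i = Sum.inl j ∧ e = s(i, j) with hP
  set w : Sym2 V → ℕ := fun e => (Finset.univ.filter (fun i => P i e)).card with hw
  -- the count for a fixed i over any edge collection
  have hfilter_le_one : ∀ (i : V) (F : Finset (Sym2 V)), (F.filter (fun e => P i e)).card ≤ 1 := by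
    intro i F
    by_cases hfi : ∃ j, f i = Sum.inl j
    · obtain ⟨j, hj⟩ := hfi
      apply Finset.card_le_one.2
      intro e1 he1 e2 he2
      rw [Finset.mem_filter] at he1 he2
      obtain ⟨_, j1, hj1, he1'⟩ := he1
      obtain ⟨_, j2, hj2, he2'⟩ := he2
      have h1 : j1 = j := Sum.inl_injective (hj1.symm.trans hj)
      have h2 : j2 = j := Sum.inl_injective (hj2.symm.trans hj)
      rw [he1', he2', h1, h2]
    · have : F.filter (fun e => P i e) = ∅ := by
        rw [Finset.filter_eq_empty_iff]
        rintro e _ ⟨j, hj, _⟩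
        exact hfi ⟨j, hj⟩
      simp [this]
  refine ⟨w, ⟨?_, ?_⟩, ?_⟩
  · -- w e ≤ 2 on edges
    intro e _
    induction e with
    | h a b =>
      rw [hw]
      have hsub : (Finset.univ.filter (fun i => P i s(a, b))) ⊆ {a, b} := by
        intro i hi
        rw [Finset.mem_filter] at hi
        obtain ⟨j, _, hij⟩ := hi.2
        have : i ∈ s(a, b) := by rw [hij]; exact Sym2.mem_iff.2 (Or.inl rfl)
        rw [Sym2.mem_iff] at this
        simpa using this
      calc (Finset.univ.filter (fun i => P i s(a, b))).card ≤ ({a, b} : Finset V).card :=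
            Finset.card_le_card hsub
        _ ≤ 2 := Finset.card_insert_le a {b} |>.trans (by simp)
  · -- degree bound
    intro v
    rw [finsum_incidence]
    have hswap : ∑ e ∈ G.incidenceFinset v, w e
        = ∑ i : V, ((G.incidenceFinset v).filter (fun e => P i e)).card := by
      rw [hw]
      simp_rw [Finset.card_filter]
      rw [Finset.sum_comm]
    rw [hswap]
    set Q : V → Prop := fun i => i = v ∨ f i = Sum.inl v with hQ
    have hzero : ∀ i : V, ¬ Q i → ((G.incidenceFinset v).filter (fun e => P i e)).card = 0 := by
      intro i hQi
      rw [Finset.card_eq_zero, Finset.filter_eq_empty_iff]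
      rintro e he ⟨j, hj, hej⟩
      have hv : v ∈ e := ((G.mem_incidenceFinset v e).1 he).2
      rw [hej, Sym2.mem_iff] at hv
      rcases hv with hv | hv
      · exact hQi (Or.inl hv.symm)
      · exact hQi (Or.inr (hv ▸ hj))
    have hQcard : (Finset.univ.filter Q).card ≤ 2 := by
      have hsub : Finset.univ.filter Q ⊆ insert v (Finset.univ.filter (fun i => f i = Sum.inl v)) := by
        intro i hi
        rw [Finset.mem_filter] at hi
        rcases hi.2 with h | h
        · rw [h]; exact Finset.mem_insert_self v _
        · exact Finset.mem_insert_of_mem (by rw [Finset.mem_filter]; exact ⟨Finset.mem_univ i, h⟩)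
      have hone : (Finset.univ.filter (fun i => f i = Sum.inl v)).card ≤ 1 := by
        apply Finset.card_le_one.2
        intro i1 h1 i2 h2
        rw [Finset.mem_filter] at h1 h2
        exact hfinj (h1.2.trans h2.2.symm)
      calc (Finset.univ.filter Q).card
          ≤ (insert v (Finset.univ.filter (fun i => f i = Sum.inl v))).card :=
            Finset.card_le_card hsub
        _ ≤ _ := Finset.card_insert_le _ _
        _ ≤ 2 := by omega
    calc ∑ i : V, ((G.incidenceFinset v).filter (fun e => P i e)).card
        = ∑ i ∈ Finset.univ.filter Q, ((G.incidenceFinset v).filter (fun e => P i e)).card := by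
          symm
          apply Finset.sum_filter_of_ne
          intro i _ hne
          by_contra hQi
          exact hne (hzero i hQi)
      _ ≤ ∑ _i ∈ Finset.univ.filter Q, 1 :=
          Finset.sum_le_sum (fun i _ => hfilter_le_one i _)
      _ = (Finset.univ.filter Q).card := by simp
      _ ≤ 2 := hQcard
  · -- size bound
    have hswap : ∑ e ∈ G.edgeFinset, w e
        = ∑ i : V, ((G.edgeFinset).filter (fun e => P i e)).card := by
      rw [hw]
      simp_rw [Finset.card_filter]
      rw [Finset.sum_comm]
    set M : Finset V := Finset.univ.filter (fun i => ∃ j, f i = Sum.inl j) with hM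
    have hone : ∀ i ∈ M, ((G.edgeFinset).filter (fun e => P i e)).card = 1 := by
      intro i hi
      rw [hM, Finset.mem_filter] at hi
      obtain ⟨_, j, hj⟩ := hi
      have hmem : s(i, j) ∈ (G.edgeFinset).filter (fun e => P i e) := by
        rw [Finset.mem_filter, SimpleGraph.mem_edgeFinset, SimpleGraph.mem_edgeSet]
        exact ⟨hadj_of i j hj, j, hj, rfl⟩
      have := hfilter_le_one i G.edgeFinset
      have hpos : 0 < ((G.edgeFinset).filter (fun e => P i e)).card :=
        Finset.card_pos.2 ⟨_, hmem⟩
      omega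
    have hzero : ∀ i ∈ Finset.univ \ M, ((G.edgeFinset).filter (fun e => P i e)).card = 0 := by
      intro i hi
      rw [Finset.mem_sdiff, hM, Finset.mem_filter] at hi
      rw [Finset.card_eq_zero, Finset.filter_eq_empty_iff]
      rintro e _ ⟨j, hj, _⟩
      exact hi.2 ⟨Finset.mem_univ i, j, hj⟩
    have hsum : ∑ i : V, ((G.edgeFinset).filter (fun e => P i e)).card = M.card := by
      rw [← Finset.sum_sdiff (Finset.subset_univ M),
        Finset.sum_congr rfl hzero, Finset.sum_congr rfl hone]
      simp
    -- the unmatched vertices inject into Fin D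
    have hUM : (Finset.univ \ M).card ≤ D := by
      have himg : (Finset.univ \ M).image f ⊆ (Finset.univ : Finset (Fin D)).map inrEmb := by
        intro x hx
        rw [Finset.mem_image] at hx
        obtain ⟨i, hi, rfl⟩ := hx
        rw [Finset.mem_sdiff, hM, Finset.mem_filter] at hi
        have hcase : (∃ j, f i = Sum.inl j) ∨ (∃ k, f i = Sum.inr k) := by
          rcases f i with j | k
          · exact Or.inl ⟨j, rfl⟩
          · exact Or.inr ⟨k, rfl⟩
        rcases hcase with ⟨j, hfi⟩ | ⟨k, hfi⟩
        · exact absurd ⟨Finset.mem_univ i, j, hfi⟩ hi.2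
        · rw [Finset.mem_map]
          exact ⟨k, Finset.mem_univ k, by rw [hfi]; rfl⟩
      have h1 := Finset.card_le_card himg
      rw [Finset.card_image_of_injective _ hfinj, Finset.card_map, Finset.card_univ,
        Fintype.card_fin] at h1
      exact h1
    have hMcard : M.card + (Finset.univ \ M).card = Fintype.card V := by
      rw [Finset.card_sdiff_of_subset (Finset.subset_univ M), Finset.card_univ]
      have := Finset.card_le_card (Finset.subset_univ M)
      rw [Finset.card_univ] at this
      omega
    have hfinal : ∑ e ∈ G.edgeFinset, w e = M.card := by rw [hswap, hsum]
    rw [← Nat.cast_sum, hfinal]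
    omega

/-- Any 2-vertex cover has size at least `n - nuBar`. -/
lemma cover_lower (nuBar : ℤ) (hnonneg : 0 ≤ nuBar)
    (hub : ∀ S : Finset V, S.Nonempty → IsIndepF G S → vuln G S ≤ nuBar)
    (u : V → ℕ) (hu : IsTwoVertexCover G u) :
    (Fintype.card V : ℤ) - (∑ i, u i : ℤ) ≤ nuBar := by
  classical
  have hcast : (∑ i : V, (u i : ℤ)) = (((∑ i : V, u i) : ℕ) : ℤ) := (Nat.cast_sum _ _).symm
  rw [hcast]
  set S : Finset V := Finset.univ.filter (fun i => u i = 0) with hS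
  rcases S.eq_empty_or_nonempty with h | h
  · have hge : (Fintype.card V : ℕ) ≤ ∑ i, u i := by
      calc (Fintype.card V : ℕ) = ∑ _i : V, 1 := by simp
      _ ≤ ∑ i, u i := by
        refine Finset.sum_le_sum (fun i _ => ?_)
        have : i ∉ S := by rw [h]; exact Finset.notMem_empty i
        rw [hS, Finset.mem_filter] at this
        simp only [Finset.mem_univ, true_and] at this
        omega
    omega
  · have hSind : IsIndepF G S := by
      intro i hi j hj hadj
      rw [hS, Finset.mem_filter] at hi hj
      have := hu.2 i j hadj
      omega
    set N := nbhd G S with hN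
    have hN2 : ∀ i ∈ N, 2 ≤ u i := by
      intro i hi
      obtain ⟨j, hjS, hadj⟩ := (mem_nbhd G).1 hi
      rw [hS, Finset.mem_filter] at hjS
      have := hu.2 j i hadj
      omega
    have hdisj : Disjoint S N := by
      rw [Finset.disjoint_left]
      intro v hvS hvN
      obtain ⟨i, hiS, hadj⟩ := (mem_nbhd G).1 hvN
      exact hSind i hiS v hvS hadj
    set R := (Finset.univ \ S) \ N with hR
    have hNsub : N ⊆ Finset.univ \ S := by
      intro v hv
      simp only [Finset.mem_sdiff, Finset.mem_univ, true_and]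
      exact fun hvS => (Finset.disjoint_left.1 hdisj) hvS hv
    have hcardR : R.card + S.card + N.card = Fintype.card V := by
      rw [hR, Finset.card_sdiff_of_subset hNsub, Finset.card_sdiff_of_subset (Finset.subset_univ S)]
      have h1 : S.card ≤ Fintype.card V := by
        simpa using Finset.card_le_card (Finset.subset_univ S)
      have h2 : N.card ≤ Fintype.card V - S.card := by
        have := Finset.card_le_card hNsub
        rwa [Finset.card_sdiff_of_subset (Finset.subset_univ S), Finset.card_univ] at this
      simp only [Finset.card_univ] at *
      omega
    have hsplit : ∑ i : V, u i = ∑ i ∈ S, u i + ∑ i ∈ N, u i + ∑ i ∈ R, u i := by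
      rw [← Finset.sum_sdiff (Finset.subset_univ S), ← Finset.sum_sdiff hNsub]
      ring
    have hNge : 2 * N.card ≤ ∑ i ∈ N, u i := by
      calc 2 * N.card = ∑ _i ∈ N, 2 := by rw [Finset.sum_const, smul_eq_mul, mul_comm]
      _ ≤ ∑ i ∈ N, u i := Finset.sum_le_sum hN2
    have hRge : R.card ≤ ∑ i ∈ R, u i := by
      calc R.card = ∑ _i ∈ R, 1 := by simp
      _ ≤ ∑ i ∈ R, u i := by
        refine Finset.sum_le_sum (fun i hi => ?_)
        rw [hR] at hi
        simp only [Finset.mem_sdiff, Finset.mem_univ, true_and] at hi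
        have : i ∉ S := hi.1
        rw [hS, Finset.mem_filter] at this
        simp only [Finset.mem_univ, true_and] at this
        omega
    have hvuln := hub S h hSind
    rw [vuln, ← hN] at hvuln
    omega

end VulnAux

/-- For a finite simple undirected connected graph `G` with `ν̄_G ≥ 0`, one has
`ν̄_G = |V| - ν₂(G) = |V| - τ₂(G)`, where `ν₂(G)` is the maximum size of a 2-matching of `G`
and `τ₂(G)` is the minimum size of a 2-vertex cover of `G`. -/
theorem vulnerability_eq_card_sub_max2Matching_of_nonneg
    [Fintype V] [DecidableEq V] (G : SimpleGraph V) [DecidableRel G.Adj]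
    (hconn : G.Connected) (nuBar : ℤ) (nu2 tau2 : ℕ)
    (hBar : IsGreatest {x : ℤ | ∃ S : Finset V, S.Nonempty ∧ IsIndepF G S ∧ vuln G S = x} nuBar)
    (hnonneg : 0 ≤ nuBar)
    (h2m : IsGreatest {n : ℕ |
      ∃ w : Sym2 V → ℕ, IsTwoMatching G w ∧ ∑ᶠ e ∈ G.edgeSet, w e = n} nu2)
    (h2c : IsLeast {n : ℕ | ∃ u : V → ℕ, IsTwoVertexCover G u ∧ ∑ i, u i = n} tau2) :
    nuBar = (Fintype.card V : ℤ) - (nu2 : ℤ) ∧ nuBar = (Fintype.card V : ℤ) - (tau2 : ℤ) := by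
    classical
  obtain ⟨S, hSne, hSind, hSv⟩ := hBar.1
  have hub : ∀ T : Finset V, T.Nonempty → IsIndepF G T → vuln G T ≤ nuBar :=
    fun T h1 h2 => hBar.2 ⟨T, h1, h2, rfl⟩
  rw [vuln] at hSv
  obtain ⟨u0, hu0, hu0s⟩ := h2c.1
  have hF1 : (Fintype.card V : ℤ) - (tau2 : ℤ) ≤ nuBar := by
    have h := cover_lower G nuBar hnonneg hub u0 hu0
    have hb : (∑ i : V, (u0 i : ℤ)) = (((∑ i : V, u0 i) : ℕ) : ℤ) := (Nat.cast_sum _ _).symm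
    rw [hb, hu0s] at h
    exact h
  obtain ⟨w0, hw0, hw0s⟩ := h2m.1
  have hw0s' : ∑ e ∈ G.edgeFinset, w0 e = nu2 := by
    rw [← finsum_edge]; exact hw0s
  have hF2 : (nu2 : ℤ) ≤ (Fintype.card V : ℤ) - nuBar := by
    have h := matching_size_le G S hSind w0 hw0
    rw [hw0s'] at h
    omega
  have hF3 : (tau2 : ℤ) ≤ (Fintype.card V : ℤ) - nuBar := by
    obtain ⟨u, hu, hus⟩ := cover_exists G S hSind
    have h := h2c.2 ⟨u, hu, rfl⟩
    omega
  have hF4 : (Fintype.card V : ℤ) - nuBar ≤ (nu2 : ℤ) := by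
    obtain ⟨w, hw, hws⟩ := big_matching_exists G nuBar hnonneg
      (deficiency_le G nuBar hnonneg hub)
    have hle : ∑ᶠ e ∈ G.edgeSet, w e ≤ nu2 := h2m.2 ⟨w, hw, rfl⟩
    rw [finsum_edge] at hle
    have hb : (∑ e ∈ G.edgeFinset, (w e : ℤ)) = (((∑ e ∈ G.edgeFinset, w e) : ℕ) : ℤ) :=
      (Nat.cast_sum _ _).symm
    rw [hb] at hws
    omega
  constructor <;> omega
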